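/- Let Ω ⊂ ℝ^N be bounded measurable, α, β ∈ L^∞(Ω) with α < β a.e., U = {v ∈ L²(Ω) : α ≤ v ≤ β a.e.}, ū ∈ U, and û* ∈ N(ū;U). Then U is polyhedric at ū for û*: T(ū;U) ∩ {û*}^⊥ = closure( cone(U − ū) ∩ {û*}^⊥ ), where cone(U − ū) = ⋃_{t>0}(U − ū)/t and {û*}^⊥ = {v ∈ L²(Ω) : ⟨û*, v⟩ = 0}. -/

import Mathlib

open MeasureTheory RealInnerProductSpace
open Filter Topology
set_option maxHeartbeats 1000000
set_option synthInstance.maxHeartbeats 200000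

/-- Radial cone to a set `Θ` at `u₀`. -/
def radialCone {H : Type*} [NormedAddCommGroup H] [InnerProductSpace ℝ H]
    (Θ : Set H) (u₀ : H) : Set H :=
  {v : H | ∃ t : ℝ, 0 < t ∧ ∃ w ∈ Θ, v = t⁻¹ • (w - u₀)}

/-- Tangent cone: closure of the radial cone. -/
def tangentCone' {H : Type*} [NormedAddCommGroup H] [InnerProductSpace ℝ H]
    (Θ : Set H) (u₀ : H) : Set H := closure (radialCone Θ u₀)

/-- Normal cone of convex analysis. -/
def normalCone' {H : Type*} [NormedAddCommGroup H] [InnerProductSpace ℝ H]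
    (Θ : Set H) (u₀ : H) : Set H :=
  {u' : H | ∀ u ∈ Θ, ⟪u', u - u₀⟫ ≤ 0}

/-- Orthogonal complement of a single vector. -/
def perp {H : Type*} [NormedAddCommGroup H] [InnerProductSpace ℝ H] (u' : H) : Set H :=
  {v : H | ⟪u', v⟫ = 0}

section Aux

variable {X : Type*} [MeasurableSpace X] {μ : Measure X}

lemma my_inner_eq (f g : Lp ℝ 2 μ) : ⟪f, g⟫ = ∫ x, f x * g x ∂μ := by
  rw [MeasureTheory.L2.inner_def]
  refine integral_congr_ae (Eventually.of_forall fun x => ?_)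
  simp [RCLike.inner_apply, mul_comm]

lemma my_integrable (f g : Lp ℝ 2 μ) : Integrable (fun x => f x * g x) μ := by
  have := MeasureTheory.L2.integrable_inner (𝕜 := ℝ) f g
  simpa [RCLike.inner_apply, mul_comm] using this

lemma my_trunc (u₀ w : Lp ℝ 2 μ) {S : Set X} (hS : MeasurableSet S) :
    ∃ z : Lp ℝ 2 μ,
      (↑↑z : X → ℝ) =ᵐ[μ] fun x => u₀ x + S.indicator (fun y => w y - u₀ y) x := by
  refine ⟨u₀ + ((Lp.memLp (w - u₀)).indicator (ε := ℝ) hS).toLp _, ?_⟩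
  filter_upwards [Lp.coeFn_add u₀ (((Lp.memLp (w - u₀)).indicator (ε := ℝ) hS).toLp _),
    MemLp.coeFn_toLp ((Lp.memLp (w - u₀)).indicator (ε := ℝ) hS), Lp.coeFn_sub w u₀] with x h1 h2 h3
  rw [h1]
  simp only [Pi.add_apply]
  congr 1
  rw [h2]
  by_cases hx : x ∈ S
  · rw [Set.indicator_of_mem hx, Set.indicator_of_mem hx, h3]; rfl
  · rw [Set.indicator_of_notMem hx, Set.indicator_of_notMem hx]

lemma my_key {α β : X → ℝ} {U : Set (Lp ℝ 2 μ)}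
    (hU : U = {v : Lp ℝ 2 μ | ∀ᵐ x ∂μ, α x ≤ v x ∧ v x ≤ β x})
    {u₀ : Lp ℝ 2 μ} (hu₀ : u₀ ∈ U) {u' : Lp ℝ 2 μ}
    (hu' : ∀ u ∈ U, ⟪u', u - u₀⟫ ≤ 0) {w : Lp ℝ 2 μ} (hw : w ∈ U) :
    ∀ᵐ x ∂μ, u' x * (w x - u₀ x) ≤ 0 := by
  rw [hU] at hu₀ hw
  have hint : Integrable (fun x => u' x * (w x - u₀ x)) μ := by
    refine (my_integrable u' (w - u₀)).congr ?_
    filter_upwards [Lp.coeFn_sub w u₀] with x hx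
    rw [hx]; rfl
  have hneg : 0 ≤ᵐ[μ] fun x => -(u' x * (w x - u₀ x)) := by
    apply ae_nonneg_of_forall_setIntegral_nonneg hint.neg
    intro s hs _
    obtain ⟨z, hz⟩ := my_trunc u₀ w hs
    have hzU : z ∈ U := by
      simp only [hU, Set.mem_setOf_eq]
      filter_upwards [hz, hu₀, hw] with x h0 h1 h2
      rw [h0]
      by_cases hx : x ∈ s
      · rw [Set.indicator_of_mem hx]
        constructor <;> [linarith [h2.1]; linarith [h2.2]]
      · rw [Set.indicator_of_notMem hx]
        simpa using h1
    have h1 : ⟪u', z - u₀⟫ ≤ 0 := hu' z hzU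
    have h2 : ⟪u', z - u₀⟫ = ∫ x in s, u' x * (w x - u₀ x) ∂μ := by
      rw [my_inner_eq, ← integral_indicator hs]
      refine integral_congr_ae ?_
      filter_upwards [Lp.coeFn_sub z u₀, hz] with x hx hzx
      rw [hx]
      simp only [Pi.sub_apply]
      rw [hzx]
      by_cases hxs : x ∈ s
      · rw [Set.indicator_of_mem hxs, Set.indicator_of_mem hxs]; ring
      · rw [Set.indicator_of_notMem hxs, Set.indicator_of_notMem hxs]; ring
    simp only [Pi.neg_apply]
    rw [integral_neg]
    linarith [h2 ▸ h1]
  filter_upwards [hneg] with x hx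
  simpa using hx


end Aux

theorem stmt10 {N : ℕ} (Ω : Set (EuclideanSpace ℝ (Fin N)))
    (hΩm : MeasurableSet Ω) (hΩb : Bornology.IsBounded Ω)
    (μ : Measure (EuclideanSpace ℝ (Fin N))) (hμ : μ = volume.restrict Ω)
    (α β : EuclideanSpace ℝ (Fin N) → ℝ)
    (hbd : ∃ M : ℝ, ∀ᵐ x ∂μ, |α x| ≤ M ∧ |β x| ≤ M)
    (hαβ : ∀ᵐ x ∂μ, α x < β x)
    (U : Set (Lp ℝ 2 μ))
    (hU : U = {v : Lp ℝ 2 μ | ∀ᵐ x ∂μ, α x ≤ v x ∧ v x ≤ β x})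
    (u₀ : Lp ℝ 2 μ) (hu₀ : u₀ ∈ U)
    (u' : Lp ℝ 2 μ) (hu' : u' ∈ normalCone' U u₀) :
    tangentCone' U u₀ ∩ perp u' = closure (radialCone U u₀ ∩ perp u') := by
  have hu'n : ∀ u ∈ U, ⟪u', u - u₀⟫ ≤ 0 := hu'
  apply Set.Subset.antisymm
  · rintro v ⟨hvT, hvperp⟩
    have hvperp' : ⟪u', v⟫ = 0 := hvperp
    obtain ⟨g, hgmeas, hgae⟩ : ∃ g : EuclideanSpace ℝ (Fin N) → ℝ,
        Measurable g ∧ (↑↑u' : _ → ℝ) =ᵐ[μ] g :=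
      ⟨(Lp.aestronglyMeasurable u').mk _,
        (Lp.aestronglyMeasurable u').stronglyMeasurable_mk.measurable,
        (Lp.aestronglyMeasurable u').ae_eq_mk⟩
    set S : Set (EuclideanSpace ℝ (Fin N)) := {x | g x = 0} with hSdef
    have hS : MeasurableSet S := hgmeas (measurableSet_singleton 0)
    obtain ⟨vseq, hvseq, hvlim⟩ := mem_closure_iff_seq_limit.mp hvT
    choose t ht w hwU heq using hvseq
    have hcoe : ∀ n, (↑↑(vseq n) : _ → ℝ) =ᵐ[μ] fun x => (t n)⁻¹ * (w n x - u₀ x) := by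
      intro n
      rw [heq n]
      filter_upwards [Lp.coeFn_smul ((t n)⁻¹) (w n - u₀), Lp.coeFn_sub (w n) u₀] with x h1 h2
      rw [h1]
      simp only [Pi.smul_apply, smul_eq_mul]
      rw [h2]
      rfl
    have hsign : ∀ n, ∀ᵐ x ∂μ, u' x * (vseq n) x ≤ 0 := by
      intro n
      have hk := my_key hU hu₀ hu'n (hwU n)
      filter_upwards [hk, hcoe n] with x h1 h2
      rw [h2]
      have h3 : u' x * ((t n)⁻¹ * (w n x - u₀ x)) = (t n)⁻¹ * (u' x * (w n x - u₀ x)) := by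
        ring
      rw [h3]
      exact mul_nonpos_of_nonneg_of_nonpos (inv_nonneg.mpr (ht n).le) h1
    have htim : TendstoInMeasure μ (fun n => ⇑(vseq n)) atTop ⇑v :=
      tendstoInMeasure_of_tendsto_Lp hvlim
    obtain ⟨ns, -, hns⟩ := htim.exists_seq_tendsto_ae
    have hvle : ∀ᵐ x ∂μ, u' x * v x ≤ 0 := by
      filter_upwards [hns, ae_all_iff.mpr hsign] with x h1 h2
      have h3 : Tendsto (fun i => u' x * (vseq (ns i)) x) atTop (𝓝 (u' x * v x)) :=
        h1.const_mul _
      exact le_of_tendsto h3 (Eventually.of_forall fun i => h2 (ns i))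
    have hint : Integrable (fun x => u' x * v x) μ := my_integrable u' v
    have hzero : ∀ᵐ x ∂μ, u' x * v x = 0 := by
      have h0 : ∫ x, -(u' x * v x) ∂μ = 0 := by
        rw [integral_neg]
        have h1 : ∫ x, u' x * v x ∂μ = ⟪u', v⟫ := (my_inner_eq u' v).symm
        rw [h1, hvperp']
        ring
      have hnn : 0 ≤ᵐ[μ] fun x => -(u' x * v x) := by
        filter_upwards [hvle] with x hx
        simpa using hx
      have heq0 := (integral_eq_zero_iff_of_nonneg_ae hnn hint.neg).mp h0
      filter_upwards [heq0] with x hx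
      have : -(u' x * v x) = 0 := hx
      linarith
    have hvS : ∀ᵐ x ∂μ, x ∉ S → (v : _ → ℝ) x = 0 := by
      filter_upwards [hzero, hgae] with x h1 h2 hx
      have hg : g x ≠ 0 := hx
      have hu'x : (u' : _ → ℝ) x ≠ 0 := by rw [h2]; exact hg
      exact (mul_eq_zero.mp h1).resolve_left hu'x
    choose z hz using fun n => my_trunc u₀ (w n) hS
    set v' : ℕ → Lp ℝ 2 μ := fun n => (t n)⁻¹ • (z n - u₀) with hv'def
    have hzU : ∀ n, z n ∈ U := by
      intro n
      have h0 := hu₀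
      have h1 := hwU n
      rw [hU] at h0 h1
      simp only [hU, Set.mem_setOf_eq]
      filter_upwards [hz n, h0, h1] with x ha hb hc
      rw [ha]
      by_cases hx : x ∈ S
      · rw [Set.indicator_of_mem hx]
        exact ⟨by linarith [hc.1], by linarith [hc.2]⟩
      · rw [Set.indicator_of_notMem hx]
        simpa using hb
    have hv'R : ∀ n, v' n ∈ radialCone U u₀ := fun n => ⟨t n, ht n, z n, hzU n, rfl⟩
    have hv'perp : ∀ n, v' n ∈ perp u' := by
      intro n
      show ⟪u', v' n⟫ = 0
      have h1 : ⟪u', z n - u₀⟫ = 0 := by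
        rw [my_inner_eq]
        have h2 : (fun x => (u' : _ → ℝ) x * (z n - u₀ : Lp ℝ 2 μ) x) =ᵐ[μ] 0 := by
          filter_upwards [Lp.coeFn_sub (z n) u₀, hz n, hgae] with x ha hb hcg
          rw [ha]
          simp only [Pi.sub_apply, Pi.zero_apply]
          rw [hb]
          by_cases hx : x ∈ S
          · rw [hcg]
            have hg0 : g x = 0 := hx
            simp [hg0]
          · rw [Set.indicator_of_notMem hx]
            ring
        rw [integral_congr_ae h2]
        simp
      rw [real_inner_smul_right, h1]
      ring
    have hnorm : ∀ n, ‖v' n - v‖ ≤ ‖vseq n - v‖ := by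
      intro n
      rw [Lp.norm_def, Lp.norm_def]
      refine ENNReal.toReal_mono (Lp.eLpNorm_ne_top _) (eLpNorm_mono_ae ?_)
      filter_upwards [Lp.coeFn_sub (v' n) v, Lp.coeFn_sub (vseq n) v,
        Lp.coeFn_smul ((t n)⁻¹) (z n - u₀), Lp.coeFn_sub (z n) u₀, hz n, hvS,
        hcoe n] with x h1 h2 h3 h4 h5 h6 h7
      rw [h1, h2]
      simp only [Pi.sub_apply]
      have hv'x : (v' n : _ → ℝ) x = (t n)⁻¹ * S.indicator (fun y => w n y - u₀ y) x := by
        show ((t n)⁻¹ • (z n - u₀) : Lp ℝ 2 μ) x = _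
        rw [h3]
        simp only [Pi.smul_apply, smul_eq_mul]
        rw [h4]
        simp only [Pi.sub_apply]
        rw [h5]
        ring
      by_cases hx : x ∈ S
      · rw [Set.indicator_of_mem hx] at hv'x
        rw [hv'x, ← h7]
      · rw [Set.indicator_of_notMem hx] at hv'x
        rw [hv'x, h6 hx]
        simp
    have hlim' : Tendsto v' atTop (𝓝 v) := by
      rw [tendsto_iff_norm_sub_tendsto_zero]
      exact squeeze_zero (fun n => norm_nonneg _) hnorm
        (tendsto_iff_norm_sub_tendsto_zero.mp hvlim)
    exact mem_closure_iff_seq_limit.mpr ⟨v', fun n => ⟨hv'R n, hv'perp n⟩, hlim'⟩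
  · have hperp_closed : IsClosed (perp u') :=
      isClosed_eq (Continuous.inner continuous_const continuous_id) continuous_const
    intro v hv
    have h1 : closure (radialCone U u₀ ∩ perp u') ⊆
        closure (radialCone U u₀) ∩ closure (perp u') :=
      closure_inter_subset_inter_closure _ _
    obtain ⟨h2, h3⟩ := h1 hv
    exact ⟨h2, hperp_closed.closure_eq ▸ h3⟩
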